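/- Let n ∈ ℕ and let (c, b) be an n-admissible pair with associated matrix A = (c, b; 0, n/c). Let (x_0, x_1, …, x_k) be the minimal partition of x_0 = b/(n/c), with x_j = p_j/q_j, gcd(p_j, q_j) = 1 and q_j ≥ 0. Then the iterates K^j(A) are well defined for j = 0, 1, …, k−1, one has K^j(A) = (q_{k−1−j}, −p_{k−1−j}; q_{k−j}, −p_{k−j})·A for each such j, and K^{k−1}(A) ∈ Y_n (so the chain of A has length k). -/

import Mathlib

/-- `Sset n`: 2×2 integer matrices `(a, b; c, d)` with `a > c ≥ 0`, `d > b ≥ 0`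
and `a*d − b*c = n`. -/
def Sset (n : ℕ) : Set (Matrix (Fin 2) (Fin 2) ℤ) :=
  {A | 0 ≤ A 1 0 ∧ A 1 0 < A 0 0 ∧ 0 ≤ A 0 1 ∧ A 0 1 < A 1 1 ∧
    A 0 0 * A 1 1 - A 0 1 * A 1 0 = (n : ℤ)}

/-- `Yset n = {(c, 0; a, n/c) : c ∣ n, 0 ≤ a < c}`. -/
def Yset (n : ℕ) : Set (Matrix (Fin 2) (Fin 2) ℤ) :=
  {A | ∃ c a : ℤ, c ∣ (n : ℤ) ∧ 0 ≤ a ∧ a < c ∧ A = !![c, 0; a, (n : ℤ) / c]}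

/-- The operator `K(a, b; c, d) = (−c + ⌈d/b⌉·a, −d + ⌈d/b⌉·b; a, b)`. -/
def Kop (A : Matrix (Fin 2) (Fin 2) ℤ) : Matrix (Fin 2) (Fin 2) ℤ :=
  !![-A 1 0 + ⌈(A 1 1 : ℚ) / (A 0 1 : ℚ)⌉ * A 0 0,
     -A 1 1 + ⌈(A 1 1 : ℚ) / (A 0 1 : ℚ)⌉ * A 0 1;
     A 0 0, A 0 1]

/-- The matrix `A_{(c,b)} = (c, b; 0, n/c)` attached to an `n`-admissible pair. -/
def Amat (n c b : ℕ) : Matrix (Fin 2) (Fin 2) ℤ :=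
  !![(c : ℤ), (b : ℤ); 0, ((n / c : ℕ) : ℤ)]

lemma ceil_helper (a b t : ℤ) (hb : 0 < b) (h1 : a ≤ t * b) (h2 : (t - 1) * b < a) :
    ⌈(a : ℚ) / (b : ℚ)⌉ = t := by
  have hb' : (0 : ℚ) < (b : ℚ) := by exact_mod_cast hb
  rw [Int.ceil_eq_iff]
  constructor
  · rw [lt_div_iff₀ hb']
    have : ((t - 1 : ℤ) : ℚ) * (b : ℚ) < (a : ℚ) := by exact_mod_cast h2
    push_cast at this ⊢
    linarith
  · rw [div_le_iff₀ hb']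
    exact_mod_cast h1

lemma Kop_apply (a b c d : ℤ) :
    Kop !![a, b; c, d] = !![-c + ⌈(d : ℚ) / (b : ℚ)⌉ * a, -d + ⌈(d : ℚ) / (b : ℚ)⌉ * b; a, b] := by
  simp [Kop]


set_option maxHeartbeats 1600000

/-- Lemma 6.3: let `(c, b)` be an `n`-admissible pair with associated matrix
`A = (c, b; 0, n/c)`, and let `(x_0, …, x_k)` be the minimal partition of
`x_0 = b/(n/c)`, with `x_j = p_j/q_j`, `gcd(p_j, q_j) = 1`, `q_j ≥ 0`.  Then
the iterates `K^j(A)` are well defined for `j = 0, …, k−1` (i.e. they lie in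
`S_n`, and outside `Y_n` for `j < k−1`), one has
`K^j(A) = (q_{k−1−j}, −p_{k−1−j}; q_{k−j}, −p_{k−j})·A`, and
`K^{k−1}(A) ∈ Y_n`, so the chain of `A` has length `k`. -/
theorem K_iterates_eq_minimal_partition (n : ℕ) (hn : 1 ≤ n) (c b : ℕ)
    (hc : 1 ≤ c) (hcn : c ∣ n) (hb : b < n / c)
    (hadm : ∃ k < c, Nat.gcd c (b + k * (n / c)) = 1)
    (k : ℕ) (p q : ℕ → ℤ)
    (hcop : ∀ j ≤ k, Int.gcd (p j) (q j) = 1)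
    (hqnn : ∀ j ≤ k, 0 ≤ q j)
    (hq0 : 0 < q 0)
    (hx0 : (p 0 : ℚ) / (q 0 : ℚ) = (b : ℚ) / ((n / c : ℕ) : ℚ))
    (hdet : ∀ j < k, p j * q (j + 1) - p (j + 1) * q j = 1)
    (hdec : ∀ j < k, q (j + 1) < q j)
    (hpk : p k = -1) (hqk : q k = 0) :
    (∀ j < k, Kop^[j] (Amat n c b) ∈ Sset n) ∧
    (∀ j, j + 1 < k → Kop^[j] (Amat n c b) ∉ Yset n) ∧
    Kop^[k - 1] (Amat n c b) ∈ Yset n ∧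
    (∀ j < k, Kop^[j] (Amat n c b) =
      !![q (k - 1 - j), -p (k - 1 - j); q (k - j), -p (k - j)] * Amat n c b) := by
  have hk1 : 1 ≤ k := by
    rcases Nat.eq_zero_or_pos k with h | h
    · subst h; rw [hqk] at hq0; exact absurd hq0 (lt_irrefl 0)
    · exact h
  set m : ℕ := n / c with hm
  have hm1 : 1 ≤ m := by omega
  have hnm : n = c * m := (Nat.mul_div_cancel' hcn).symm
  have hnmZ : (n : ℤ) = (c : ℤ) * (m : ℤ) := by exact_mod_cast hnm
  have hmZ : (0 : ℤ) < (m : ℤ) := by exact_mod_cast hm1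
  have hcZ : (0 : ℤ) < (c : ℤ) := by exact_mod_cast hc
  have hbZ : (b : ℤ) < (m : ℤ) := by exact_mod_cast hb
  have hqpos : ∀ i < k, 0 < q i := by
    intro i hi
    have h1 := hdec i hi
    have h2 := hqnn (i + 1) hi
    linarith
  have hq_km1 : q (k - 1) = 1 := by
    have hd := hdet (k - 1) (by omega)
    have hs : k - 1 + 1 = k := by omega
    rw [hs, hpk, hqk] at hd
    linarith
  have hp0m : p 0 * (m : ℤ) = q 0 * (b : ℤ) := by
    have hq0' : ((q 0 : ℤ) : ℚ) ≠ 0 := by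
      exact_mod_cast hq0.ne'
    have hm' : ((m : ℕ) : ℚ) ≠ 0 := Nat.cast_ne_zero.mpr (by omega)
    field_simp at hx0
    have h' : p 0 * (m : ℤ) = q 0 * (b : ℤ) := by exact_mod_cast hx0
    linarith [h', mul_comm (b : ℤ) (q 0)]
  have hpbound : ∀ i < k, 0 ≤ p i ∧ p i < q i := by
    intro i
    induction i with
    | zero =>
      intro _
      constructor
      · nlinarith [hp0m, hq0, hmZ, (by exact_mod_cast Nat.zero_le b : (0:ℤ) ≤ (b:ℤ))]
      · nlinarith [hp0m, hq0, hmZ, hbZ]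
    | succ i ih =>
      intro h
      have hi : i < k := by omega
      obtain ⟨h1, h2⟩ := ih hi
      have hd := hdet i hi
      have hqi := hqpos i hi
      have hqi1 := hqpos (i + 1) h
      constructor
      · by_contra hneg
        push_neg at hneg
        have hple : p (i + 1) ≤ -1 := by omega
        have h3 := mul_le_mul_of_nonneg_right hple hqi.le
        have h4 := mul_nonneg h1 hqi1.le
        have h5 := hdec i hi
        linarith
      · by_contra hle
        push_neg at hle
        have h3 := mul_le_mul_of_nonneg_right hle hqi.le
        have h4 := mul_lt_mul_of_pos_right h2 hqi1
        nlinarith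
  have hpk1 : p (k - 1) = 0 := by
    obtain ⟨h1, h2⟩ := hpbound (k - 1) (by omega)
    rw [hq_km1] at h2
    omega
  set e : ℕ → ℤ := fun i => q i * (b : ℤ) - p i * (m : ℤ) with he
  have he0 : e 0 = 0 := by simp only [he]; linarith [hp0m]
  have hek : e k = (m : ℤ) := by simp only [he]; rw [hpk, hqk]; ring
  have hek1 : e (k - 1) = (b : ℤ) := by simp only [he]; rw [hq_km1, hpk1]; ring
  have he1 : q 0 * e 1 = (m : ℤ) := by
    have hd0 := hdet 0 hk1
    simp only [he]
    linear_combination (-(q 1)) * hp0m + (m : ℤ) * hd0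
  have he1pos : 0 < e 1 := by nlinarith [he1, hq0, hmZ]
  have hT : ∀ i, 0 < i → i < k →
      ∃ t : ℤ, 2 ≤ t ∧ q (i - 1) + q (i + 1) = t * q i ∧ p (i - 1) + p (i + 1) = t * p i := by
    intro i h0 hik
    have hd1 := hdet (i - 1) (by omega)
    have hs : i - 1 + 1 = i := by omega
    rw [hs] at hd1
    have hd2 := hdet i hik
    have hqi := hqpos i hik
    have hcopi := hcop i (le_of_lt hik)
    have hkey : p i * (q (i - 1) + q (i + 1)) = q i * (p (i - 1) + p (i + 1)) := by
      linear_combination hd2 - hd1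
    have hdvd : q i ∣ (q (i - 1) + q (i + 1)) := by
      have hcp : IsCoprime (q i) (p i) := (Int.isCoprime_iff_gcd_eq_one.mpr hcopi).symm
      exact hcp.dvd_of_dvd_mul_left ⟨p (i - 1) + p (i + 1), hkey⟩
    obtain ⟨t, ht⟩ := hdvd
    refine ⟨t, ?_, by rw [ht]; ring, ?_⟩
    · have hd := hdec (i - 1) (by omega)
      rw [hs] at hd
      have hq1 := hqnn (i + 1) hik
      have h6 : q i * 1 < q i * t := by linarith
      have h7 := lt_of_mul_lt_mul_left h6 hqi.le
      omega
    · have h7 : q i * (p i * t) = q i * (p (i - 1) + p (i + 1)) := by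
        linear_combination hkey - p i * ht
      have h8 := mul_left_cancel₀ hqi.ne' h7
      linarith
  have hEinc : ∀ i < k, 0 ≤ e i ∧ e i < e (i + 1) := by
    intro i
    induction i using Nat.strong_induction_on with
    | _ i ih =>
      intro hik
      match i with
      | 0 => exact ⟨le_of_eq he0.symm, by rw [he0]; exact he1pos⟩
      | (j + 1) =>
        obtain ⟨t, ht2, htq, htp⟩ := hT (j + 1) (Nat.succ_pos j) hik
        simp only [Nat.add_sub_cancel] at htq htp
        obtain ⟨hprev1, hprev2⟩ := ih j (by omega) (by omega)
        have hrec : e (j + 2) = t * e (j + 1) - e j := by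
          simp only [he]
          linear_combination (b : ℤ) * htq - (m : ℤ) * htp
        have hej1pos : 0 < e (j + 1) := lt_of_le_of_lt hprev1 hprev2
        constructor
        · linarith
        · have h9 : e (j + 1) ≤ (t - 1) * e (j + 1) :=
            le_mul_of_one_le_left hej1pos.le (by linarith)
          have h10 : (t - 1) * e (j + 1) = t * e (j + 1) - e (j + 1) := by ring
          linarith
  have hEnonneg : ∀ i ≤ k, 0 ≤ e i := by
    intro i hi
    rcases lt_or_eq_of_le hi with h | h
    · exact (hEinc i h).1
    · rw [h, hek]; exact hmZ.le
  have hEpos : ∀ i, 0 < i → i ≤ k → 0 < e i := by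
    intro i h0 hik
    obtain ⟨h1, h2⟩ := hEinc (i - 1) (by omega)
    have hs : i - 1 + 1 = i := by omega
    rw [hs] at h2
    linarith
  have hAm : Amat n c b = !![(c : ℤ), (b : ℤ); 0, (m : ℤ)] := by
    rw [Amat, ← hm]
  have hB : ∀ j < k, Kop^[j] (Amat n c b) =
      !![q (k - 1 - j) * c, e (k - 1 - j); q (k - j) * c, e (k - j)] := by
    intro j
    induction j with
    | zero =>
      intro _
      simp only [Function.iterate_zero, id_eq, Nat.sub_zero]
      rw [hAm, hq_km1, hqk, hek1, hek]
      norm_num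
    | succ j ih =>
      intro hj
      have hj' : j < k := by omega
      rw [Function.iterate_succ_apply', ih hj']
      have hi1 : 0 < k - 1 - j := by omega
      have hik : k - 1 - j < k := by omega
      set i := k - 1 - j with hidef
      have hkj : k - j = i + 1 := by omega
      have hkj1 : k - 1 - (j + 1) = i - 1 := by omega
      have hkj2 : k - (j + 1) = i := by omega
      obtain ⟨t, ht2, htq, htp⟩ := hT i hi1 hik
      obtain ⟨hEm1nn, hEm1lt⟩ := hEinc (i - 1) (by omega)
      have hs : i - 1 + 1 = i := by omega
      rw [hs] at hEm1lt
      have hEipos : 0 < e i := lt_of_le_of_lt hEm1nn hEm1lt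
      have hrec : e (i + 1) = t * e i - e (i - 1) := by
        simp only [he]
        linear_combination (b : ℤ) * htq - (m : ℤ) * htp
      have hceil : ⌈(e (i + 1) : ℚ) / (e i : ℚ)⌉ = t := by
        apply ceil_helper _ _ _ hEipos
        · linarith
        · have h10 : (t - 1) * e i = t * e i - e i := by ring
          linarith
      rw [hkj, hkj1, hkj2, Kop_apply, hceil]
      have hq' : -(q (i + 1) * (c : ℤ)) + t * (q i * (c : ℤ)) = q (i - 1) * (c : ℤ) := by
        linear_combination (-(c : ℤ)) * htq
      have he' : -e (i + 1) + t * e i = e (i - 1) := by linarith [hrec]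
      rw [hq', he']
  refine ⟨?_, ?_, ?_, ?_⟩
  · -- Sset
    intro j hj
    rw [hB j hj]
    have hkj : k - j = (k - 1 - j) + 1 := by omega
    set i := k - 1 - j with hidef
    have hik : i < k := by omega
    have hdi := hdet i hik
    simp only [Sset, Set.mem_setOf_eq, Matrix.of_apply, Matrix.cons_val', Matrix.cons_val_zero, Matrix.empty_val', Matrix.cons_val_fin_one, Matrix.cons_val_one, Matrix.head_fin_const, Matrix.head_cons]
    refine ⟨?_, ?_, ?_, ?_, ?_⟩
    · rw [hkj]; exact mul_nonneg (hqnn (i + 1) hik) hcZ.le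
    · rw [hkj]; exact mul_lt_mul_of_pos_right (hdec i hik) hcZ
    · exact hEnonneg i (le_of_lt hik)
    · rw [hkj]; exact (hEinc i hik).2
    · rw [hkj]
      simp only [he]
      linear_combination ((c : ℤ) * (m : ℤ)) * hdi + hnmZ.symm
  · -- not in Yset
    intro j hj hY
    rw [hB j (by omega)] at hY
    obtain ⟨c', a', _, _, _, hEq⟩ := hY
    have h01 := congrFun (congrFun hEq 0) 1
    simp only [Matrix.of_apply, Matrix.cons_val', Matrix.cons_val_zero, Matrix.empty_val', Matrix.cons_val_fin_one, Matrix.cons_val_one, Matrix.head_fin_const, Matrix.head_cons] at h01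
    have := hEpos (k - 1 - j) (by omega) (by omega)
    omega
  · -- Yset at k-1
    rw [hB (k - 1) (by omega)]
    have h1 : k - 1 - (k - 1) = 0 := by omega
    have h2 : k - (k - 1) = 1 := by omega
    rw [h1, h2]
    refine ⟨q 0 * c, q 1 * c, ?_, ?_, ?_, ?_⟩
    · exact ⟨e 1, by linear_combination hnmZ + (c : ℤ) * he1.symm⟩
    · exact mul_nonneg (hqnn 1 hk1) hcZ.le
    · exact mul_lt_mul_of_pos_right (hdec 0 hk1) hcZ
    · have hne : q 0 * (c : ℤ) ≠ 0 := (mul_pos hq0 hcZ).ne'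
      have hdiv : (n : ℤ) / (q 0 * c) = e 1 := by
        rw [show (n : ℤ) = (q 0 * c) * e 1 by linear_combination hnmZ + (c : ℤ) * he1.symm]
        exact Int.mul_ediv_cancel_left _ hne
      rw [hdiv, he0]
  · -- formula
    intro j hj
    rw [hB j hj, hAm, Matrix.mul_fin_two]
    simp only [he]
    ext a' b'
    fin_cases a' <;> fin_cases b' <;>
      simp only [Matrix.of_apply, Matrix.cons_val', Matrix.cons_val_zero, Matrix.empty_val', Matrix.cons_val_fin_one, Matrix.cons_val_one, Matrix.head_fin_const, Matrix.head_cons] <;> ring
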